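/- For all n ≥ 0 and h ≥ 0, the number of Motzkin paths of length n with height exactly h that have at least one horizontal step at level h equals S(n, 2h+3) − S(n, 2h+4), where for a ≥ 1, S(n, a) := ∑_{k≥1} [ T(n, n+2−k·a) − 2·T(n, n−k·a) + T(n, n−2−k·a) ] (a finite sum, since T(n, j) = 0 for j < 0). -/

import Mathlib

open Finset
open scoped Classical

/-- A step: `+1`, `-1` or `0`. -/
abbrev Step : Type := ({1, -1, 0} : Finset ℤ)

/-- Partial sum of the first `k` steps. -/
def psum {n : ℕ} (w : Fin n → Step) (k : ℕ) : ℤ :=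
  ∑ i : Fin n, if (i : ℕ) < k then (w i : ℤ) else 0

/-- `w` is a Motzkin path: all partial sums are nonnegative and the total sum is `0`. -/
def IsMotzkin {n : ℕ} (w : Fin n → Step) : Prop :=
  (∀ k ∈ Finset.range (n + 1), 0 ≤ psum w k) ∧ psum w n = 0

/-- The height of a path: the maximum of its partial sums (`0` for the empty path). -/
def height {n : ℕ} (w : Fin n → Step) : ℤ :=
  (Finset.range (n + 1)).sup' (Finset.nonempty_range_iff.mpr (Nat.succ_ne_zero n)) (psum w)

/-- `w` has a horizontal step at level `j`: some step is `0` and the partial sum up to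
and including that step equals `j`. -/
def HasHorizAt {n : ℕ} (w : Fin n → Step) (j : ℤ) : Prop :=
  ∃ i : Fin n, (w i : ℤ) = 0 ∧ psum w ((i : ℕ) + 1) = j

/-- The trinomial coefficient `T n k`: the coefficient of `t^k` in `(1 + t + t^2)^n`,
extended by `0` for negative `k`. -/
noncomputable def T (n : ℕ) (k : ℤ) : ℤ :=
  if 0 ≤ k then ((1 + Polynomial.X + Polynomial.X ^ 2 : Polynomial ℤ) ^ n).coeff k.toNat
  else 0

/-- `S n a = ∑_{k ≥ 1} (T n (n+2-k·a) - 2 T n (n-k·a) + T n (n-2-k·a))`; for `a ≥ 1`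
all terms with `k > n + 2` vanish, so the sum may be truncated there. -/
noncomputable def S (n a : ℕ) : ℤ :=
  ∑ k ∈ Finset.Icc 1 (n + 2),
    (T n ((n : ℤ) + 2 - k * a) - 2 * T n ((n : ℤ) - k * a) + T n ((n : ℤ) - 2 - k * a))


namespace MAux

lemma T_neg {n : ℕ} {k : ℤ} (hk : k < 0) : T n k = 0 := by
  simp [T, not_le.mpr hk]
lemma T_gt {n : ℕ} {k : ℤ} (hk : 2 * n < k) : T n k = 0 := by
  have h0 : (0:ℤ) ≤ k := le_trans (by positivity) hk.le
  rw [T, if_pos h0]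
  apply Polynomial.coeff_eq_zero_of_natDegree_lt
  have hdeg : ((1 + Polynomial.X + Polynomial.X ^ 2 : Polynomial ℤ) ^ n).natDegree ≤ 2 * n := by
    refine le_trans (Polynomial.natDegree_pow_le) ?_
    have : (1 + Polynomial.X + Polynomial.X ^ 2 : Polynomial ℤ).natDegree ≤ 2 := by
      compute_degree
    nlinarith [this]
  have : 2 * n < k.toNat := by omega
  omega

lemma T_zero {k : ℤ} : T 0 k = if k = 0 then 1 else 0 := by
  rcases lt_or_ge k 0 with hk | hk
  · rw [T_neg hk, if_neg (by omega)]
  · rw [T, if_pos hk, pow_zero, Polynomial.coeff_one]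
    by_cases h : k = 0 <;> simp [h] <;> omega

lemma T_rec (n : ℕ) (k : ℤ) : T (n+1) k = T n k + T n (k-1) + T n (k-2) := by
  rcases lt_or_ge k 0 with hk | hk
  · rw [T_neg hk, T_neg hk, T_neg (by omega), T_neg (by omega)]; ring
  · set p := (1 + Polynomial.X + Polynomial.X ^ 2 : Polynomial ℤ) with hpdef
    have hp : p ^ (n+1) = p^n * 1 + p^n * Polynomial.X + p^n * Polynomial.X^2 := by
      rw [pow_succ]; ring
    have hc : (p ^ (n+1)).coeff k.toNat = (p^n).coeff k.toNat
        + (p^n * Polynomial.X).coeff k.toNat + (p^n * Polynomial.X^2).coeff k.toNat := by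
      rw [hp]; simp [Polynomial.coeff_add]
    have hX : (p^n * Polynomial.X).coeff k.toNat = T n (k-1) := by
      rw [← pow_one Polynomial.X, Polynomial.coeff_mul_X_pow']
      rcases lt_or_ge k 1 with h1 | h1
      · rw [if_neg (by omega), T_neg (by omega)]
      · rw [if_pos (by omega), T, if_pos (by omega)]
        congr 1; omega
    have hX2 : (p^n * Polynomial.X^2).coeff k.toNat = T n (k-2) := by
      rw [Polynomial.coeff_mul_X_pow']
      rcases lt_or_ge k 2 with h1 | h1
      · rw [if_neg (by omega), T_neg (by omega)]
      · rw [if_pos (by omega), T, if_pos (by omega)]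
        congr 1; omega
    rw [show T (n+1) k = (p ^ (n+1)).coeff k.toNat from if_pos hk, hc, hX, hX2]
    rw [show T n k = (p ^ n).coeff k.toNat from if_pos hk]

lemma T_symm (n : ℕ) (k : ℤ) : T n k = T n (2*n - k) := by
  induction n generalizing k with
  | zero => rw [T_zero, T_zero]; simp only [Nat.cast_zero]; by_cases h : k = 0
            · rw [if_pos h, if_pos (by omega)]
            · rw [if_neg h, if_neg (by omega)]
  | succ n ih =>
      rw [T_rec, T_rec, ih k, ih (k-1), ih (k-2)]
      push_cast
      ring_nf



noncomputable def Fa (a n : ℕ) (j : ℤ) : ℤ :=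
  ∑ k ∈ Finset.Icc (-(n:ℤ)-2) ((n:ℤ)+2),
    (T n ((n:ℤ) + j - k*(a:ℤ)) - T n ((n:ℤ) - j - 2 - k*(a:ℤ)))

lemma term_zero {a n : ℕ} (ha : 3 ≤ a) {j k : ℤ} (hj1 : -1 ≤ j) (hj2 : j ≤ a)
    (hk : k < -(n:ℤ)-2 ∨ (n:ℤ)+2 < k) :
    T n ((n:ℤ) + j - k*(a:ℤ)) - T n ((n:ℤ) - j - 2 - k*(a:ℤ)) = 0 := by
  have ha' : (3:ℤ) ≤ (a:ℤ) := by exact_mod_cast ha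
  rcases hk with hk | hk
  · have h1 : k ≤ -((n:ℤ)+3) := by omega
    have h2 : k*(a:ℤ) ≤ -((n:ℤ)+3)*(a:ℤ) := mul_le_mul_of_nonneg_right h1 (by linarith)
    rw [T_gt (by nlinarith), T_gt (by nlinarith)]; ring
  · have h1 : ((n:ℤ)+3) ≤ k := by omega
    have h2 : ((n:ℤ)+3)*(a:ℤ) ≤ k*(a:ℤ) := mul_le_mul_of_nonneg_right h1 (by linarith)
    rw [T_neg (by nlinarith), T_neg (by nlinarith)]; ring

lemma Fa_ext {a n : ℕ} (ha : 3 ≤ a) {j : ℤ} (hj1 : -1 ≤ j) (hj2 : j ≤ a) {M : ℤ}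
    (hM : (n:ℤ)+2 ≤ M) :
    ∑ k ∈ Finset.Icc (-M) M,
      (T n ((n:ℤ) + j - k*(a:ℤ)) - T n ((n:ℤ) - j - 2 - k*(a:ℤ))) = Fa a n j := by
  rw [Fa]; symm
  apply Finset.sum_subset
  · intro x hx; simp only [Finset.mem_Icc] at *; omega
  · intro x hx hx'; simp only [Finset.mem_Icc] at hx hx'
    exact term_zero ha hj1 hj2 (by omega)

lemma Fa_rec {a n : ℕ} (ha : 3 ≤ a) {j : ℤ} (hj0 : 0 ≤ j) (hj : j ≤ (a:ℤ) - 1) :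
    Fa a (n+1) j = Fa a n (j-1) + Fa a n j + Fa a n (j+1) := by
  rw [← Fa_ext (n := n) (M := (n:ℤ)+3) ha (j := j-1) (by omega) (by omega) (by omega),
      ← Fa_ext (n := n) (M := (n:ℤ)+3) ha (j := j) (by omega) (by omega) (by omega),
      ← Fa_ext (n := n) (M := (n:ℤ)+3) ha (j := j+1) (by omega) (by omega) (by omega)]
  rw [Fa, show Finset.Icc (-(↑(n+1):ℤ)-2) ((↑(n+1):ℤ)+2)
      = Finset.Icc (-((n:ℤ)+3)) ((n:ℤ)+3) by push_cast; ring_nf]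
  rw [← Finset.sum_add_distrib, ← Finset.sum_add_distrib]
  apply Finset.sum_congr rfl
  intro k hk
  push_cast
  rw [T_rec, T_rec]
  ring_nf

lemma Fa_neg_one (a n : ℕ) : Fa a n (-1) = 0 := by
  rw [Fa]
  apply Finset.sum_eq_zero
  intro k hk
  rw [show (n:ℤ) + (-1) - k*(a:ℤ) = (n:ℤ) - (-1) - 2 - k*(a:ℤ) by ring, sub_self]

lemma sum_shift {n : ℕ} (g : ℤ → ℤ) (h1 : g (-(n:ℤ)-2) = 0) (h2 : g ((n:ℤ)+3) = 0) :
    ∑ k ∈ Finset.Icc (-(n:ℤ)-2) ((n:ℤ)+2), g (k+1)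
      = ∑ k ∈ Finset.Icc (-(n:ℤ)-2) ((n:ℤ)+2), g k := by
  have e1 : ∑ k ∈ Finset.Icc (-(n:ℤ)-2) ((n:ℤ)+2), g (k+1)
      = ∑ k ∈ Finset.Icc (-(n:ℤ)-1) ((n:ℤ)+3), g k := by
    have hmap : Finset.Icc (-(n:ℤ)-1) ((n:ℤ)+3)
        = (Finset.Icc (-(n:ℤ)-2) ((n:ℤ)+2)).map (addRightEmbedding 1) := by
      rw [Finset.map_add_right_Icc]; congr 1 <;> ring
    rw [hmap, Finset.sum_map]
    simp [addRightEmbedding]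
  rw [e1]
  have e2 : ∑ k ∈ Finset.Icc (-(n:ℤ)-1) ((n:ℤ)+3), g k
      = ∑ k ∈ Finset.Icc (-(n:ℤ)-2) ((n:ℤ)+3), g k := by
    apply Finset.sum_subset
    · intro x hx; simp only [Finset.mem_Icc] at *; omega
    · intro x hx hx'; simp only [Finset.mem_Icc] at hx hx'
      have : x = -(n:ℤ)-2 := by omega
      rw [this]; exact h1
  have e3 : ∑ k ∈ Finset.Icc (-(n:ℤ)-2) ((n:ℤ)+2), g k
      = ∑ k ∈ Finset.Icc (-(n:ℤ)-2) ((n:ℤ)+3), g k := by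
    apply Finset.sum_subset
    · intro x hx; simp only [Finset.mem_Icc] at *; omega
    · intro x hx hx'; simp only [Finset.mem_Icc] at hx hx'
      have : x = (n:ℤ)+3 := by omega
      rw [this]; exact h2
  rw [e2, e3]

lemma Fa_top (n h : ℕ) : Fa (2*h+4) n ((h:ℤ)+1) = 0 := by
  set a : ℕ := 2*h+4 with hadef
  have ha : (a:ℤ) = 2*(h:ℤ)+4 := by push_cast [hadef]; ring
  set g : ℤ → ℤ := fun k => T n ((n:ℤ)+(h:ℤ)+1-k*(a:ℤ)) with hg
  have hterm : ∀ k : ℤ, T n ((n:ℤ) + ((h:ℤ)+1) - k*(a:ℤ))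
      - T n ((n:ℤ) - ((h:ℤ)+1) - 2 - k*(a:ℤ)) = g k - g (k+1) := by
    intro k
    have e1 : (n:ℤ) + ((h:ℤ)+1) - k*(a:ℤ) = (n:ℤ)+(h:ℤ)+1-k*(a:ℤ) := by ring
    have e2 : (n:ℤ) - ((h:ℤ)+1) - 2 - k*(a:ℤ) = (n:ℤ)+(h:ℤ)+1-(k+1)*(a:ℤ) := by
      rw [ha]; ring
    rw [e1, e2]
  rw [Fa]
  rw [Finset.sum_congr rfl (fun k _ => hterm k), Finset.sum_sub_distrib]
  rw [sum_shift g]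
  · ring
  · rw [hg]
    apply T_gt
    have : (0:ℤ) ≤ (n:ℤ) := by positivity
    nlinarith [ha]
  · rw [hg]
    apply T_neg
    have : (0:ℤ) ≤ (n:ℤ) := by positivity
    nlinarith [ha]

lemma Ga_top (n h : ℕ) : Fa (2*h+3) n (h:ℤ) + Fa (2*h+3) n ((h:ℤ)+1) = 0 := by
  set a : ℕ := 2*h+3 with hadef
  have ha : (a:ℤ) = 2*(h:ℤ)+3 := by push_cast [hadef]; ring
  set g : ℤ → ℤ := fun k => T n ((n:ℤ)+(h:ℤ)-k*(a:ℤ)) + T n ((n:ℤ)+(h:ℤ)+1-k*(a:ℤ)) with hg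
  have hterm : ∀ k : ℤ,
      (T n ((n:ℤ) + (h:ℤ) - k*(a:ℤ)) - T n ((n:ℤ) - (h:ℤ) - 2 - k*(a:ℤ)))
      + (T n ((n:ℤ) + ((h:ℤ)+1) - k*(a:ℤ)) - T n ((n:ℤ) - ((h:ℤ)+1) - 2 - k*(a:ℤ)))
      = g k - g (k+1) := by
    intro k
    have e1 : (n:ℤ) - (h:ℤ) - 2 - k*(a:ℤ) = (n:ℤ)+(h:ℤ)+1-(k+1)*(a:ℤ) := by rw [ha]; ring
    have e2 : (n:ℤ) - ((h:ℤ)+1) - 2 - k*(a:ℤ) = (n:ℤ)+(h:ℤ)-(k+1)*(a:ℤ) := by rw [ha]; ring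
    have e3 : (n:ℤ) + ((h:ℤ)+1) - k*(a:ℤ) = (n:ℤ)+(h:ℤ)+1-k*(a:ℤ) := by ring
    rw [e1, e2, e3, hg]; ring
  rw [Fa, Fa, ← Finset.sum_add_distrib]
  rw [Finset.sum_congr rfl (fun k _ => hterm k), Finset.sum_sub_distrib]
  rw [sum_shift g]
  · ring
  · rw [hg]
    have : (0:ℤ) ≤ (n:ℤ) := by positivity
    simp only []
    rw [T_gt (by nlinarith [ha]), T_gt (by nlinarith [ha])]; ring
  · rw [hg]
    have : (0:ℤ) ≤ (n:ℤ) := by positivity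
    simp only []
    rw [T_neg (by nlinarith [ha]), T_neg (by nlinarith [ha])]; ring

lemma Fa_base {a : ℕ} (ha : 3 ≤ a) {j : ℤ} (hj1 : -1 ≤ j) (hj2 : j + 2 < a) :
    Fa a 0 j = if j = 0 then 1 else 0 := by
  have ha' : (3:ℤ) ≤ (a:ℤ) := by exact_mod_cast ha
  rw [Fa]
  have h0 : ({0} : Finset ℤ) ⊆ Finset.Icc (-(0:ℕ)-2 : ℤ) ((0:ℕ)+2 : ℤ) := by
    intro x hx; simp only [Finset.mem_singleton] at hx
    simp [hx]
  rw [← Finset.sum_subset h0 ?h]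
  case h =>
    intro k hk hk'
    simp only [Finset.mem_Icc, Nat.cast_zero] at hk
    simp only [Finset.mem_singleton] at hk'
    have hka : (a:ℤ) ≤ k*(a:ℤ) ∨ k*(a:ℤ) ≤ -(a:ℤ) := by
      rcases le_or_gt 1 k with h1 | h1
      · left
        calc (a:ℤ) = 1*(a:ℤ) := by ring
        _ ≤ k*(a:ℤ) := mul_le_mul_of_nonneg_right h1 (by linarith)
      · right
        have h1 : k ≤ -1 := by omega
        calc k*(a:ℤ) ≤ (-1)*(a:ℤ) := mul_le_mul_of_nonneg_right h1 (by linarith)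
        _ = -(a:ℤ) := by ring
    rw [T_zero, T_zero, if_neg (by omega), if_neg (by omega)]
    ring
  rw [Finset.sum_singleton]
  rw [T_zero, T_zero]
  simp only [Nat.cast_zero, zero_mul, mul_zero]
  by_cases h : j = 0
  · rw [if_pos (by omega), if_neg (by omega), if_pos h]; ring
  · rw [if_neg (by omega), if_neg (by omega), if_neg h]; ring


lemma sum_nat_int (m : ℕ) (g : ℤ → ℤ) :
    ∑ k ∈ Finset.Icc (1:ℤ) (m:ℤ), g k = ∑ k ∈ Finset.Icc (1:ℕ) m, g (k:ℤ) := by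
  symm
  apply Finset.sum_nbij' (i := fun k : ℕ => (k:ℤ)) (j := fun k : ℤ => k.toNat)
  · intro a ha; simp only [Finset.mem_Icc] at *; omega
  · intro a ha; simp only [Finset.mem_Icc] at *; omega
  · intro a ha; simp
  · intro a ha; simp only [Finset.mem_Icc] at ha; omega
  · intro a ha; rfl

lemma Fa_S {a n : ℕ} (ha : 3 ≤ a) : Fa a n 0 = T n (n:ℤ) - T n ((n:ℤ)-2) - S n a := by
  classical
  set f : ℤ → ℤ := fun k => T n ((n:ℤ) + 0 - k*(a:ℤ)) - T n ((n:ℤ) - 0 - 2 - k*(a:ℤ)) with hf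
  have hU : Finset.Icc (-(n:ℤ)-2) ((n:ℤ)+2)
      = Finset.Icc (-(n:ℤ)-2) (-1) ∪ Finset.Icc (0:ℤ) ((n:ℤ)+2) := by
    ext x; simp only [Finset.mem_Icc, Finset.mem_union]; omega
  have hdisj : Disjoint (Finset.Icc (-(n:ℤ)-2) (-1)) (Finset.Icc (0:ℤ) ((n:ℤ)+2)) := by
    rw [Finset.disjoint_left]; intro x hx hx'
    simp only [Finset.mem_Icc] at hx hx'; omega
  have hins : Finset.Icc (0:ℤ) ((n:ℤ)+2) = insert 0 (Finset.Icc (1:ℤ) ((n:ℤ)+2)) := by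
    ext x; simp only [Finset.mem_Icc, Finset.mem_insert]; omega
  have hnotmem : (0:ℤ) ∉ Finset.Icc (1:ℤ) ((n:ℤ)+2) := by simp
  have hneg : ∑ k ∈ Finset.Icc (-(n:ℤ)-2) (-1), f k
      = ∑ k ∈ Finset.Icc (1:ℤ) ((n:ℤ)+2), f (-k) := by
    have hmap : Finset.Icc (-(n:ℤ)-2) (-1)
        = (Finset.Icc (1:ℤ) ((n:ℤ)+2)).map ⟨fun x => -x, neg_injective⟩ := by
      ext x
      simp only [Finset.mem_Icc, Finset.mem_map, Function.Embedding.coeFn_mk]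
      constructor
      · intro hx; exact ⟨-x, by omega, by ring⟩
      · rintro ⟨y, hy, rfl⟩; omega
    rw [hmap, Finset.sum_map]
    rfl
  have hnegterm : ∀ k : ℤ, f (-k) = T n ((n:ℤ) - k*(a:ℤ)) - T n ((n:ℤ) + 2 - k*(a:ℤ)) := by
    intro k
    rw [hf]
    simp only []
    rw [show (n:ℤ) + 0 - (-k)*(a:ℤ) = (n:ℤ) + k*(a:ℤ) by ring,
        show (n:ℤ) - 0 - 2 - (-k)*(a:ℤ) = (n:ℤ) - 2 + k*(a:ℤ) by ring,
        T_symm n ((n:ℤ) + k*(a:ℤ)), T_symm n ((n:ℤ) - 2 + k*(a:ℤ)),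
        show 2*(n:ℤ) - ((n:ℤ) + k*(a:ℤ)) = (n:ℤ) - k*(a:ℤ) by ring,
        show 2*(n:ℤ) - ((n:ℤ) - 2 + k*(a:ℤ)) = (n:ℤ) + 2 - k*(a:ℤ) by ring]
  have hS : S n a = ∑ k ∈ Finset.Icc (1:ℤ) ((n:ℤ)+2),
      (T n ((n:ℤ) + 2 - k*(a:ℤ)) - 2 * T n ((n:ℤ) - k*(a:ℤ)) + T n ((n:ℤ) - 2 - k*(a:ℤ))) := by
    rw [S, show ((n:ℤ)+2) = ((n+2:ℕ):ℤ) by push_cast; ring, sum_nat_int]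
  calc Fa a n 0 = ∑ k ∈ Finset.Icc (-(n:ℤ)-2) ((n:ℤ)+2), f k := rfl
    _ = (∑ k ∈ Finset.Icc (-(n:ℤ)-2) (-1), f k) + ∑ k ∈ Finset.Icc (0:ℤ) ((n:ℤ)+2), f k := by
        rw [hU, Finset.sum_union hdisj]
    _ = (∑ k ∈ Finset.Icc (1:ℤ) ((n:ℤ)+2), f (-k))
        + (f 0 + ∑ k ∈ Finset.Icc (1:ℤ) ((n:ℤ)+2), f k) := by
        rw [hneg, hins, Finset.sum_insert hnotmem]
    _ = f 0 + ∑ k ∈ Finset.Icc (1:ℤ) ((n:ℤ)+2), (f (-k) + f k) := by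
        rw [Finset.sum_add_distrib]; ring
    _ = T n (n:ℤ) - T n ((n:ℤ)-2) - S n a := by
        rw [hS]
        have hf0 : f 0 = T n (n:ℤ) - T n ((n:ℤ)-2) := by
          rw [hf]; norm_num
        rw [hf0]
        have hterm : ∀ k ∈ Finset.Icc (1:ℤ) ((n:ℤ)+2), f (-k) + f k
            = -(T n ((n:ℤ) + 2 - k*(a:ℤ)) - 2 * T n ((n:ℤ) - k*(a:ℤ)) + T n ((n:ℤ) - 2 - k*(a:ℤ))) := by
          intro k hk
          rw [hnegterm k, hf]
          simp only []
          ring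
        rw [Finset.sum_congr rfl hterm, Finset.sum_neg_distrib]
        ring


def up : Step := ⟨1, by decide⟩
def dn : Step := ⟨-1, by decide⟩
def fl : Step := ⟨0, by decide⟩

lemma univ_step : (Finset.univ : Finset Step) = {up, dn, fl} := by decide

lemma psum_zero {n : ℕ} (w : Fin n → Step) : psum w 0 = 0 := by simp [psum]

lemma psum_cons {n : ℕ} (s : Step) (v : Fin n → Step) (k : ℕ) :
    psum (Fin.cons s v) (k+1) = (s:ℤ) + psum v k := by
  rw [psum, psum, Fin.sum_univ_succ]
  simp only [Fin.cons_zero, Fin.cons_succ, Fin.val_zero, Fin.val_succ]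
  congr 1
  · apply Finset.sum_congr rfl
    intro i _
    simp only [Nat.add_lt_add_iff_right]

lemma card_cons (n : ℕ) (C : (Fin (n+1) → Step) → Prop) [DecidablePred C]
    [∀ s : Step, DecidablePred fun v : Fin n → Step => C (Fin.cons s v)] :
    (Finset.univ.filter fun w => C w).card
      = ∑ s : Step, (Finset.univ.filter fun v : Fin n → Step => C (Fin.cons s v)).card := by
  have e : {w : Fin (n+1) → Step // C w} ≃ Σ s : Step, {v : Fin n → Step // C (Fin.cons s v)} := by
    refine Equiv.trans ?_ (Equiv.subtypeProdEquivSigmaSubtype fun s v => C (Fin.cons s v))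
    refine Equiv.subtypeEquiv (Fin.consEquiv fun _ => Step).symm ?_
    intro w
    constructor
    · intro hw
      convert hw using 2
      exact (Fin.consEquiv fun _ => Step).apply_symm_apply w
    · intro hw
      have := (Fin.consEquiv fun _ => Step).apply_symm_apply w
      rw [show (Fin.consEquiv fun _ => Step) ((Fin.consEquiv fun _ => Step).symm w)
        = Fin.cons ((Fin.consEquiv fun _ => Step).symm w).1 ((Fin.consEquiv fun _ => Step).symm w).2
        from rfl] at this
      rw [← this]
      exact hw
  calc (Finset.univ.filter fun w => C w).card
      = Fintype.card {w : Fin (n+1) → Step // C w} := (Fintype.card_subtype _).symm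
    _ = Fintype.card (Σ s : Step, {v : Fin n → Step // C (Fin.cons s v)}) := Fintype.card_congr e
    _ = ∑ s : Step, Fintype.card {v : Fin n → Step // C (Fin.cons s v)} := Fintype.card_sigma
    _ = ∑ s : Step, (Finset.univ.filter fun v : Fin n → Step => C (Fin.cons s v)).card := by
        apply Finset.sum_congr rfl
        intro s _
        exact Fintype.card_subtype _

def stripOK (h : ℕ) (i : ℤ) {n : ℕ} (w : Fin n → Step) : Prop :=
  ∀ k, k ≤ n → 0 ≤ i + psum w k ∧ i + psum w k ≤ (h:ℤ)

def noTop (h : ℕ) (i : ℤ) {n : ℕ} (w : Fin n → Step) : Prop :=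
  ∀ idx : Fin n, (w idx : ℤ) = 0 → i + psum w ((idx:ℕ)+1) ≠ (h:ℤ)

noncomputable def Pc (h n : ℕ) (i : ℤ) : ℕ :=
  (Finset.univ.filter fun w : Fin n → Step => stripOK h i w ∧ i + psum w n = 0).card

noncomputable def Qc (h n : ℕ) (i : ℤ) : ℕ :=
  (Finset.univ.filter fun w : Fin n → Step =>
    stripOK h i w ∧ noTop h i w ∧ i + psum w n = 0).card

lemma stripOK_cons {h n : ℕ} {i : ℤ} (s : Step) (v : Fin n → Step) :
    stripOK h i (Fin.cons s v) ↔ (0 ≤ i ∧ i ≤ (h:ℤ)) ∧ stripOK h (i + s) v := by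
  constructor
  · intro hw
    refine ⟨by simpa [psum_zero] using hw 0 (by omega), ?_⟩
    intro k hk
    have := hw (k+1) (by omega)
    rw [psum_cons] at this
    constructor <;> linarith [this.1, this.2]
  · rintro ⟨h0, hrest⟩
    intro k hk
    cases k with
    | zero => simpa [psum_zero] using h0
    | succ k =>
        rw [psum_cons]
        have := hrest k (by omega)
        constructor <;> linarith [this.1, this.2]

lemma noTop_cons {h n : ℕ} {i : ℤ} (s : Step) (v : Fin n → Step) :
    noTop h i (Fin.cons s v) ↔ (((s:ℤ) = 0 → i + s ≠ (h:ℤ)) ∧ noTop h (i + s) v) := by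
  constructor
  · intro hw
    constructor
    · intro hs
      have := hw 0 (by simpa using hs)
      simpa [psum_cons, psum_zero] using this
    · intro idx hidx
      have := hw idx.succ (by simpa using hidx)
      rw [show ((idx.succ : ℕ) + 1) = ((idx:ℕ)+1)+1 from rfl, psum_cons] at this
      intro hc
      exact this (by linarith)
  · rintro ⟨h0, hrest⟩
    intro idx
    refine Fin.cases ?_ ?_ idx
    · intro hs
      rw [show ((0 : Fin (n+1)) : ℕ) + 1 = 0 + 1 from rfl, psum_cons, psum_zero]
      intro hc
      exact h0 hs (by linarith)
    · intro j hj
      rw [Fin.cons_succ] at hj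
      rw [show ((j.succ : ℕ) + 1) = ((j:ℕ)+1)+1 from rfl, psum_cons]
      intro hc
      exact hrest j hj (by linarith)

lemma Pc_out {h n : ℕ} {i : ℤ} (hout : ¬(0 ≤ i ∧ i ≤ (h:ℤ))) : Pc h n i = 0 := by
  rw [Pc, Finset.card_eq_zero, Finset.filter_eq_empty_iff]
  intro w _
  rintro ⟨hs, -⟩
  have := hs 0 (by omega)
  rw [psum_zero] at this
  simp only [add_zero] at this
  exact hout this

lemma Qc_out {h n : ℕ} {i : ℤ} (hout : ¬(0 ≤ i ∧ i ≤ (h:ℤ))) : Qc h n i = 0 := by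
  rw [Qc, Finset.card_eq_zero, Finset.filter_eq_empty_iff]
  intro w _
  rintro ⟨hs, -, -⟩
  have := hs 0 (by omega)
  rw [psum_zero] at this
  simp only [add_zero] at this
  exact hout this

lemma Pc_base {h : ℕ} {i : ℤ} : Pc h 0 i = if i = 0 then 1 else 0 := by
  rw [Pc]
  rw [show (Finset.univ : Finset (Fin 0 → Step)) = {fun x => x.elim0} from Finset.univ_unique]
  rw [Finset.filter_singleton]
  by_cases hi : i = 0
  · rw [if_pos, if_pos hi, Finset.card_singleton]
    subst hi
    refine ⟨fun k hk => ?_, by simp [psum_zero]⟩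
    interval_cases k
    rw [psum_zero]
    constructor
    · omega
    · positivity
  · rw [if_neg, if_neg hi, Finset.card_empty]
    rintro ⟨-, hend⟩
    rw [psum_zero, add_zero] at hend
    exact hi hend

lemma Qc_base {h : ℕ} {i : ℤ} : Qc h 0 i = if i = 0 then 1 else 0 := by
  rw [Qc]
  rw [show (Finset.univ : Finset (Fin 0 → Step)) = {fun x => x.elim0} from Finset.univ_unique]
  rw [Finset.filter_singleton]
  by_cases hi : i = 0
  · rw [if_pos, if_pos hi, Finset.card_singleton]
    subst hi
    refine ⟨fun k hk => ?_, fun idx => idx.elim0, by simp [psum_zero]⟩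
    interval_cases k
    rw [psum_zero]
    constructor
    · omega
    · positivity
  · rw [if_neg, if_neg hi, Finset.card_empty]
    rintro ⟨-, -, hend⟩
    rw [psum_zero, add_zero] at hend
    exact hi hend

lemma Pc_rec {h n : ℕ} {i : ℤ} (hin : 0 ≤ i ∧ i ≤ (h:ℤ)) :
    Pc h (n+1) i = Pc h n (i-1) + Pc h n i + Pc h n (i+1) := by
  rw [Pc]
  refine (card_cons n (fun w => stripOK h i w ∧ i + psum w (n+1) = 0)).trans ?_
  have key : ∀ s : Step, (Finset.univ.filter fun v : Fin n → Step =>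
      stripOK h i (Fin.cons s v) ∧ i + psum (Fin.cons s v) (n+1) = 0).card
      = Pc h n (i + s) := by
    intro s
    rw [Pc]
    apply Finset.card_bij (fun v _ => v)
    · intro v hv
      simp only [Finset.mem_filter, Finset.mem_univ, true_and] at *
      obtain ⟨h1, h2⟩ := hv
      rw [stripOK_cons] at h1
      rw [psum_cons] at h2
      exact ⟨h1.2, by linarith⟩
    · intro v _ v' _ hvv; exact hvv
    · intro v hv
      refine ⟨v, ?_, rfl⟩
      simp only [Finset.mem_filter, Finset.mem_univ, true_and] at *
      obtain ⟨h1, h2⟩ := hv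
      refine ⟨(stripOK_cons s v).mpr ⟨hin, h1⟩, ?_⟩
      rw [psum_cons]
      linarith
  rw [Finset.sum_congr rfl (fun s _ => key s)]
  rw [univ_step]
  rw [Finset.sum_insert (by decide), Finset.sum_insert (by decide), Finset.sum_singleton]
  rw [show ((up : Step) : ℤ) = 1 from rfl, show ((dn : Step) : ℤ) = -1 from rfl,
      show ((fl : Step) : ℤ) = 0 from rfl]
  rw [show i + -1 = i - 1 by ring, add_zero]
  omega

lemma Qc_rec {h n : ℕ} {i : ℤ} (hin : 0 ≤ i ∧ i ≤ (h:ℤ)) :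
    Qc h (n+1) i = Qc h n (i-1) + (if i = (h:ℤ) then 0 else Qc h n i) + Qc h n (i+1) := by
  rw [Qc]
  refine (card_cons n (fun w => stripOK h i w ∧ noTop h i w ∧ i + psum w (n+1) = 0)).trans ?_
  have key : ∀ s : Step, (Finset.univ.filter fun v : Fin n → Step =>
      stripOK h i (Fin.cons s v) ∧ noTop h i (Fin.cons s v)
        ∧ i + psum (Fin.cons s v) (n+1) = 0).card
      = if (s:ℤ) = 0 ∧ i = (h:ℤ) then 0 else Qc h n (i + s) := by
    intro s
    by_cases hbad : (s:ℤ) = 0 ∧ i = (h:ℤ)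
    · rw [if_pos hbad, Finset.card_eq_zero, Finset.filter_eq_empty_iff]
      intro v _
      rintro ⟨-, hnt, -⟩
      rw [noTop_cons] at hnt
      exact hnt.1 hbad.1 (by rw [hbad.1, add_zero]; exact hbad.2)
    · rw [if_neg hbad, Qc]
      apply Finset.card_bij (fun v _ => v)
      · intro v hv
        simp only [Finset.mem_filter, Finset.mem_univ, true_and] at *
        obtain ⟨h1, h2, h3⟩ := hv
        rw [stripOK_cons] at h1
        rw [noTop_cons] at h2
        rw [psum_cons] at h3
        exact ⟨h1.2, h2.2, by linarith⟩
      · intro v _ v' _ hvv; exact hvv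
      · intro v hv
        refine ⟨v, ?_, rfl⟩
        simp only [Finset.mem_filter, Finset.mem_univ, true_and] at *
        obtain ⟨h1, h2, h3⟩ := hv
        refine ⟨(stripOK_cons s v).mpr ⟨hin, h1⟩, ?_, ?_⟩
        · rw [noTop_cons]
          refine ⟨?_, h2⟩
          intro hs hc
          exact hbad ⟨hs, by rw [hs, add_zero] at hc; exact hc⟩
        · rw [psum_cons]; linarith
  rw [Finset.sum_congr rfl (fun s _ => key s)]
  rw [univ_step]
  rw [Finset.sum_insert (by decide), Finset.sum_insert (by decide), Finset.sum_singleton]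
  rw [if_neg (by rw [show ((up : Step) : ℤ) = 1 from rfl]; intro hc; exact one_ne_zero hc.1),
      if_neg (by rw [show ((dn : Step) : ℤ) = -1 from rfl]; intro hc; exact (by norm_num : (-1:ℤ) ≠ 0) hc.1)]
  rw [show ((up : Step) : ℤ) = 1 from rfl, show ((dn : Step) : ℤ) = -1 from rfl,
      show ((fl : Step) : ℤ) = 0 from rfl]
  rw [show i + -1 = i - 1 by ring, add_zero]
  by_cases hih : i = (h:ℤ)
  · rw [if_pos (⟨rfl, hih⟩ : (0:ℤ) = 0 ∧ i = (h:ℤ)), if_pos hih]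
    omega
  · rw [if_neg (fun hc => hih hc.2), if_neg hih]
    omega


end MAux
namespace MAux
lemma Pc_eq (h : ℕ) : ∀ n : ℕ, ∀ j : ℤ, -1 ≤ j → j ≤ (h:ℤ)+1 →
    (Pc h n j : ℤ) = Fa (2*h+4) n j := by
  intro n
  induction n with
  | zero =>
      intro j hj1 hj2
      rw [Pc_base, Fa_base (by omega) hj1 (by push_cast; omega)]
      split_ifs <;> simp
  | succ n ih =>
      intro j hj1 hj2
      by_cases hA : j = -1
      · subst hA
        rw [Pc_out (by omega), Fa_neg_one]
        simp
      by_cases hB : j = (h:ℤ)+1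
      · subst hB
        rw [Pc_out (by omega), Fa_top]
        simp
      have h0 : 0 ≤ j ∧ j ≤ (h:ℤ) := by omega
      rw [Pc_rec h0, Fa_rec (by omega) h0.1 (by push_cast; omega)]
      push_cast
      rw [ih (j-1) (by omega) (by omega), ih j (by omega) (by omega),
          ih (j+1) (by omega) (by omega)]

lemma Qc_eq (h : ℕ) : ∀ n : ℕ, ∀ j : ℤ, -1 ≤ j → j ≤ (h:ℤ) →
    (Qc h n j : ℤ) = Fa (2*h+3) n j := by
  intro n
  induction n with
  | zero =>
      intro j hj1 hj2
      rw [Qc_base, Fa_base (by omega) hj1 (by push_cast; omega)]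
      split_ifs <;> simp
  | succ n ih =>
      intro j hj1 hj2
      by_cases hA : j = -1
      · subst hA
        rw [Qc_out (by omega), Fa_neg_one]
        simp
      by_cases hB : j = (h:ℤ)
      · subst hB
        rw [Qc_rec ⟨by omega, le_refl _⟩, if_pos rfl,
            Fa_rec (by omega) (by omega) (by push_cast; omega)]
        have htop := Ga_top n h
        have hout : Qc h n ((h:ℤ)+1) = 0 := Qc_out (by omega)
        push_cast
        rw [ih ((h:ℤ)-1) (by omega) (by omega), hout]
        push_cast
        linarith
      have h0 : 0 ≤ j ∧ j ≤ (h:ℤ) := by omega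
      rw [Qc_rec h0, if_neg hB, Fa_rec (by omega) h0.1 (by push_cast; omega)]
      push_cast
      rw [ih (j-1) (by omega) (by omega), ih j (by omega) (by omega),
          ih (j+1) (by omega) (by omega)]

end MAux

/-- The number of Motzkin paths of length `n` with height exactly `h` having at least one
horizontal step at level `h` is `S n (2h+3) - S n (2h+4)`. -/
theorem horiz_count_trinomial (n h : ℕ) :
    ((Finset.univ.filter fun w : Fin n → Step =>
      IsMotzkin w ∧ height w = (h : ℤ) ∧ HasHorizAt w (h : ℤ)).card : ℤ)
      = S n (2 * h + 3) - S n (2 * h + 4) := by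
  classical
  have hiff : ∀ w : Fin n → Step,
      (IsMotzkin w ∧ height w = (h:ℤ) ∧ HasHorizAt w (h:ℤ))
      ↔ ((MAux.stripOK h 0 w ∧ 0 + psum w n = 0) ∧ HasHorizAt w (h:ℤ)) := by
    intro w
    constructor
    · rintro ⟨hm, hht, hhz⟩
      refine ⟨⟨?_, by rw [zero_add]; exact hm.2⟩, hhz⟩
      intro k hk
      constructor
      · rw [zero_add]
        exact hm.1 k (Finset.mem_range_succ_iff.mpr hk)
      · rw [zero_add]
        calc psum w k ≤ height w :=
              Finset.le_sup' (psum w) (Finset.mem_range_succ_iff.mpr hk)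
          _ = (h:ℤ) := hht
    · rintro ⟨⟨hs, he⟩, hhz⟩
      refine ⟨⟨?_, by rw [zero_add] at he; exact he⟩, ?_, hhz⟩
      · intro k hk
        have := (hs k (Finset.mem_range_succ_iff.mp hk)).1
        rw [zero_add] at this
        exact this
      · apply le_antisymm
        · apply Finset.sup'_le
          intro k hk
          have := (hs k (Finset.mem_range_succ_iff.mp hk)).2
          rw [zero_add] at this
          exact this
        · obtain ⟨i, hi0, hisum⟩ := hhz
          calc (h:ℤ) = psum w ((i:ℕ)+1) := hisum.symm
            _ ≤ height w := Finset.le_sup' (psum w)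
                (Finset.mem_range_succ_iff.mpr (by omega))
  have e1 : (Finset.univ.filter fun w : Fin n → Step =>
      IsMotzkin w ∧ height w = (h:ℤ) ∧ HasHorizAt w (h:ℤ)).card
      = (Finset.univ.filter fun w : Fin n → Step =>
        (MAux.stripOK h 0 w ∧ 0 + psum w n = 0) ∧ HasHorizAt w (h:ℤ)).card := by
    apply Finset.card_bij (fun w _ => w)
    · intro w hw
      simp only [Finset.mem_filter, Finset.mem_univ, true_and] at *
      exact (hiff w).mp hw
    · intro v _ v' _ hvv; exact hvv
    · intro w hw
      refine ⟨w, ?_, rfl⟩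
      simp only [Finset.mem_filter, Finset.mem_univ, true_and] at *
      exact (hiff w).mpr hw
  have e2 : (Finset.univ.filter fun w : Fin n → Step =>
      (MAux.stripOK h 0 w ∧ 0 + psum w n = 0) ∧ ¬ HasHorizAt w (h:ℤ)).card
      = MAux.Qc h n 0 := by
    rw [MAux.Qc]
    apply Finset.card_bij (fun w _ => w)
    · intro w hw
      simp only [Finset.mem_filter, Finset.mem_univ, true_and] at *
      obtain ⟨⟨h1, h2⟩, h3⟩ := hw
      refine ⟨h1, ?_, h2⟩
      intro idx hidx hc
      exact h3 ⟨idx, hidx, by rw [zero_add] at hc; exact hc⟩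
    · intro v _ v' _ hvv; exact hvv
    · intro w hw
      refine ⟨w, ?_, rfl⟩
      simp only [Finset.mem_filter, Finset.mem_univ, true_and] at *
      obtain ⟨h1, h2, h3⟩ := hw
      refine ⟨⟨h1, h3⟩, ?_⟩
      rintro ⟨idx, hidx, hc⟩
      exact h2 idx hidx (by rw [zero_add]; exact hc)
  have e3 : (Finset.univ.filter fun w : Fin n → Step =>
      MAux.stripOK h 0 w ∧ 0 + psum w n = 0).card = MAux.Pc h n 0 := by
    rw [MAux.Pc]
  have esplit : (Finset.univ.filter fun w : Fin n → Step =>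
      (MAux.stripOK h 0 w ∧ 0 + psum w n = 0) ∧ HasHorizAt w (h:ℤ)).card
      + (Finset.univ.filter fun w : Fin n → Step =>
      (MAux.stripOK h 0 w ∧ 0 + psum w n = 0) ∧ ¬ HasHorizAt w (h:ℤ)).card
      = (Finset.univ.filter fun w : Fin n → Step =>
        MAux.stripOK h 0 w ∧ 0 + psum w n = 0).card := by
    have hsp := Finset.card_filter_add_card_filter_not
      (s := Finset.univ.filter (fun w : Fin n → Step => MAux.stripOK h 0 w ∧ 0 + psum w n = 0))
      (p := fun w => HasHorizAt w (h:ℤ))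
    rw [Finset.filter_filter, Finset.filter_filter] at hsp
    exact hsp
  have key : ((Finset.univ.filter fun w : Fin n → Step =>
      IsMotzkin w ∧ height w = (h:ℤ) ∧ HasHorizAt w (h:ℤ)).card : ℤ)
      = (MAux.Pc h n 0 : ℤ) - (MAux.Qc h n 0 : ℤ) := by
    rw [e1]
    rw [← e3, ← e2]
    push_cast [← esplit]
    ring
  rw [key, MAux.Pc_eq h n 0 (by omega) (by omega), MAux.Qc_eq h n 0 (by omega) (by omega),
      MAux.Fa_S (a := 2*h+4) (by omega), MAux.Fa_S (a := 2*h+3) (by omega)]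
  ring
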